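/- Let X₀, X₁, X₂, X₃ be pairwise distinct coplanar points of E such that the three vectors X₀ − X₁, X₁ − X₂, X₂ − X₃ span a two-dimensional linear subspace, and let λ, μ, ν ∈ ℝ, not all zero, satisfy λ(X₀ − X₁) + μ(X₁ − X₂) + ν(X₂ − X₃) = 0. Then the four points lie on a common circle if and only if λ(‖X₀‖² − ‖X₁‖²) + μ(‖X₁‖² − ‖X₂‖²) + ν(‖X₂‖² − ‖X₃‖²) = 0. -/

import Mathlib

noncomputable section

abbrev E : Type := EuclideanSpace ℝ (Fin 3)

/-- A line: a one-dimensional affine subspace. -/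
def IsLine (s : AffineSubspace ℝ E) : Prop := Module.finrank ℝ s.direction = 1

/-- A plane: a two-dimensional affine subspace. -/
def IsPlane (s : AffineSubspace ℝ E) : Prop := Module.finrank ℝ s.direction = 2

/-- A set of points lies on a circle or a line: it is concyclic (contained in the
intersection of a sphere and a plane) or collinear. -/
def ConcyclicOrCollinear (s : Set E) : Prop :=
  EuclideanGeometry.Concyclic s ∨ Collinear ℝ s

/-- `τ` is a rotation with axis `r`: an isometry different from the identity whose
linear part has determinant 1 and which fixes every point of the line `r`. -/
def IsRotation (τ : E ≃ᵃⁱ[ℝ] E) (r : AffineSubspace ℝ E) : Prop :=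
  τ ≠ AffineIsometryEquiv.refl ℝ E ∧
  LinearMap.det (τ.linearIsometryEquiv.toLinearEquiv : E →ₗ[ℝ] E) = 1 ∧
  IsLine r ∧ ∀ x ∈ r, τ x = x

/-- `(α 0, α 1, α 2, α 3)` is a rotation quadrangle with relative revolute axes
`r i` (in the moving space): each relative displacement `τ_{i,i+1} = α (i+1) ∘ (α i)⁻¹`
is a rotation whose axis is the image `α i (r i)`. -/
def IsRotationQuadrangle (α : Fin 4 → (E ≃ᵃⁱ[ℝ] E)) (r : Fin 4 → AffineSubspace ℝ E) : Prop :=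
  ∀ i : Fin 4,
    IsRotation ((α i).symm.trans (α (i + 1)))
      ((r i).map (α i).toAffineIsometry.toAffineMap)

open RealInnerProductSpace

/-- Given two "linearly independent" vectors, any pair of inner-product values can be
realized by some vector. -/
lemma exists_inner_eq (u w : E) (hind : ∀ a b : ℝ, a • u + b • w = 0 → a = 0 ∧ b = 0)
    (e f : ℝ) : ∃ c : E, ⟪u, c⟫ = e ∧ ⟪w, c⟫ = f := by
  have hw : w ≠ 0 := fun h => one_ne_zero (hind 0 1 (by simp [h])).2
  have hwn : (‖w‖ : ℝ) ^ 2 ≠ 0 := pow_ne_zero 2 (norm_ne_zero_iff.mpr hw)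
  set a : ℝ := ⟪u, w⟫ / ‖w‖ ^ 2 with ha
  set u' : E := u - a • w with hu'
  have horth : ⟪u', w⟫ = 0 := by
    rw [hu', inner_sub_left, real_inner_smul_left, ha, real_inner_self_eq_norm_sq]
    field_simp
    ring
  have hu'0 : u' ≠ 0 := by
    intro h
    have h1 : (1 : ℝ) • u + (-a) • w = 0 := by
      rw [one_smul, neg_smul, ← sub_eq_add_neg, ← hu', h]
    exact one_ne_zero (hind 1 (-a) h1).1
  have hun : (‖u'‖ : ℝ) ^ 2 ≠ 0 := pow_ne_zero 2 (norm_ne_zero_iff.mpr hu'0)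
  have hudec : u = u' + a • w := by rw [hu']; abel
  have huw : ⟪u, w⟫ = a * ‖w‖ ^ 2 := by rw [ha]; field_simp
  have huu' : ⟪u, u'⟫ = ‖u'‖ ^ 2 := by
    rw [hudec, inner_add_left, real_inner_smul_left, real_inner_self_eq_norm_sq,
      real_inner_comm u' w, horth, mul_zero, add_zero]
  refine ⟨((e - a * f) / ‖u'‖ ^ 2) • u' + (f / ‖w‖ ^ 2) • w, ?_, ?_⟩
  · rw [inner_add_right, real_inner_smul_right, real_inner_smul_right, huu', huw]
    field_simp
    ring
  · rw [inner_add_right, real_inner_smul_right, real_inner_smul_right,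
      real_inner_comm u' w, horth, real_inner_self_eq_norm_sq]
    field_simp
    ring

/-- If the span of a pair has dimension 2, the pair admits no nontrivial linear relation. -/
lemma indep_aux (u w : E)
    (h2 : Module.finrank ℝ (Submodule.span ℝ ({u, w} : Set E)) = 2) :
    ∀ a b : ℝ, a • u + b • w = 0 → a = 0 ∧ b = 0 := by
  intro a b hab
  by_contra hcon
  have hle : Module.finrank ℝ (Submodule.span ℝ ({u, w} : Set E)) ≤ 1 := by
    have single_le : ∀ z : E, Module.finrank ℝ (Submodule.span ℝ ({z} : Set E)) ≤ 1 := by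
      intro z
      rcases eq_or_ne z 0 with rfl | hz
      · rw [Submodule.span_zero_singleton]; simp
      · rw [finrank_span_singleton hz]
    rcases not_and_or.1 hcon with ha | hb
    · have hu : u ∈ Submodule.span ℝ ({w} : Set E) := by
        have h1 : a • u = -(b • w) := by
          rw [eq_neg_iff_add_eq_zero, ← hab]
        have h2' : u = a⁻¹ • -(b • w) := by
          rw [← h1, smul_smul, inv_mul_cancel₀ ha, one_smul]
        rw [h2']
        exact Submodule.smul_mem _ _ (Submodule.neg_mem _
          (Submodule.smul_mem _ _ (Submodule.subset_span rfl)))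
      have hle' : Submodule.span ℝ ({u, w} : Set E) ≤ Submodule.span ℝ ({w} : Set E) := by
        rw [Submodule.span_le]
        rintro x hx
        rcases hx with rfl | hx
        · exact hu
        · exact Submodule.subset_span hx
      exact le_trans (Submodule.finrank_mono hle') (single_le w)
    · have hw : w ∈ Submodule.span ℝ ({u} : Set E) := by
        have h1 : b • w = -(a • u) := by
          rw [eq_neg_iff_add_eq_zero, add_comm, ← hab]
        have h2' : w = b⁻¹ • -(a • u) := by
          rw [← h1, smul_smul, inv_mul_cancel₀ hb, one_smul]
        rw [h2']
        exact Submodule.smul_mem _ _ (Submodule.neg_mem _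
          (Submodule.smul_mem _ _ (Submodule.subset_span rfl)))
      have hle' : Submodule.span ℝ ({u, w} : Set E) ≤ Submodule.span ℝ ({u} : Set E) := by
        rw [Submodule.span_le]
        rintro x hx
        rcases hx with rfl | hx
        · exact Submodule.subset_span rfl
        · rcases hx with rfl
          exact hw
      exact le_trans (Submodule.finrank_mono hle') (single_le u)
  omega

/-- Four pairwise distinct coplanar points whose consecutive difference
vectors span a plane and satisfy a nontrivial linear relation with coefficients
`lam, mu, nu` lie on a common circle iff
`lam (‖X₀‖² − ‖X₁‖²) + mu (‖X₁‖² − ‖X₂‖²) + nu (‖X₂‖² − ‖X₃‖²) = 0`. -/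
theorem concyclic_iff_circularity_condition
    (X : Fin 4 → E) (hdist : Function.Injective X)
    (hcop : Coplanar ℝ (Set.range X))
    (hspan : Module.finrank ℝ
      (Submodule.span ℝ {X 0 - X 1, X 1 - X 2, X 2 - X 3}) = 2)
    (lam mu nu : ℝ) (hnotall : ¬ (lam = 0 ∧ mu = 0 ∧ nu = 0))
    (hrel : lam • (X 0 - X 1) + mu • (X 1 - X 2) + nu • (X 2 - X 3) = 0) :
    EuclideanGeometry.Concyclic (Set.range X) ↔
      lam * (‖X 0‖ ^ 2 - ‖X 1‖ ^ 2) + mu * (‖X 1‖ ^ 2 - ‖X 2‖ ^ 2) +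
        nu * (‖X 2‖ ^ 2 - ‖X 3‖ ^ 2) = 0 := by
  constructor
  · rintro ⟨⟨c, r, hc⟩, -⟩
    have sqd : ∀ p : E, dist p c = r → ‖p‖ ^ 2 - 2 * ⟪p, c⟫ + ‖c‖ ^ 2 = r ^ 2 := by
      intro p hp
      rw [← norm_sub_sq_real, ← dist_eq_norm, hp]
    have s0 := sqd _ (hc (X 0) ⟨0, rfl⟩)
    have s1 := sqd _ (hc (X 1) ⟨1, rfl⟩)
    have s2 := sqd _ (hc (X 2) ⟨2, rfl⟩)
    have s3 := sqd _ (hc (X 3) ⟨3, rfl⟩)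
    have hin : lam * ⟪X 0 - X 1, c⟫ + mu * ⟪X 1 - X 2, c⟫ + nu * ⟪X 2 - X 3, c⟫ = 0 := by
      have h := congrArg (fun y : E => (⟪y, c⟫ : ℝ)) hrel
      simp only [inner_add_left, real_inner_smul_left, inner_zero_left] at h
      exact h
    rw [inner_sub_left, inner_sub_left, inner_sub_left] at hin
    have hA : ‖X 0‖ ^ 2 - ‖X 1‖ ^ 2 = 2 * (⟪X 0, c⟫ - ⟪X 1, c⟫) := by linarith
    have hB : ‖X 1‖ ^ 2 - ‖X 2‖ ^ 2 = 2 * (⟪X 1, c⟫ - ⟪X 2, c⟫) := by linarith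
    have hC : ‖X 2‖ ^ 2 - ‖X 3‖ ^ 2 = 2 * (⟪X 2, c⟫ - ⟪X 3, c⟫) := by linarith
    rw [hA, hB, hC]
    linear_combination 2 * hin
  · intro hcond
    refine ⟨?_, hcop⟩
    have hne : lam ≠ 0 ∨ mu ≠ 0 ∨ nu ≠ 0 := by tauto
    have key : ∃ c : E, ⟪X 0 - X 1, c⟫ = ‖X 0‖ ^ 2 - ‖X 1‖ ^ 2 ∧
        ⟪X 1 - X 2, c⟫ = ‖X 1‖ ^ 2 - ‖X 2‖ ^ 2 ∧
        ⟪X 2 - X 3, c⟫ = ‖X 2‖ ^ 2 - ‖X 3‖ ^ 2 := by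
      rcases hne with h | h | h
      · -- lam ≠ 0
        have hrel1 : lam • (X 0 - X 1) = -(mu • (X 1 - X 2) + nu • (X 2 - X 3)) := by
          rw [eq_neg_iff_add_eq_zero, ← hrel]; abel
        have hmem : X 0 - X 1 ∈ Submodule.span ℝ ({X 1 - X 2, X 2 - X 3} : Set E) := by
          have h2' : X 0 - X 1 = lam⁻¹ • -(mu • (X 1 - X 2) + nu • (X 2 - X 3)) := by
            rw [← hrel1, smul_smul, inv_mul_cancel₀ h, one_smul]
          rw [h2']
          exact Submodule.smul_mem _ _ (Submodule.neg_mem _ (Submodule.add_mem _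
            (Submodule.smul_mem _ _ (Submodule.subset_span (by simp)))
            (Submodule.smul_mem _ _ (Submodule.subset_span (by simp)))))
        have hsp : Submodule.span ℝ ({X 0 - X 1, X 1 - X 2, X 2 - X 3} : Set E)
            = Submodule.span ℝ ({X 1 - X 2, X 2 - X 3} : Set E) :=
          Submodule.span_insert_eq_span hmem
        obtain ⟨c, hc2, hc3⟩ := exists_inner_eq _ _ (indep_aux _ _ (by rw [← hsp]; exact hspan))
          (‖X 1‖ ^ 2 - ‖X 2‖ ^ 2) (‖X 2‖ ^ 2 - ‖X 3‖ ^ 2)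
        refine ⟨c, ?_, hc2, hc3⟩
        have h5 := congrArg (fun y : E => ⟪y, c⟫) hrel1
        simp only [inner_neg_left, inner_add_left, real_inner_smul_left, hc2, hc3] at h5
        have h6 : lam * ⟪X 0 - X 1, c⟫ = lam * (‖X 0‖ ^ 2 - ‖X 1‖ ^ 2) := by
          rw [h5]; linarith
        exact mul_left_cancel₀ h h6
      · -- mu ≠ 0
        have hrel1 : mu • (X 1 - X 2) = -(lam • (X 0 - X 1) + nu • (X 2 - X 3)) := by
          rw [eq_neg_iff_add_eq_zero, ← hrel]; abel
        have hmem : X 1 - X 2 ∈ Submodule.span ℝ ({X 0 - X 1, X 2 - X 3} : Set E) := by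
          have h2' : X 1 - X 2 = mu⁻¹ • -(lam • (X 0 - X 1) + nu • (X 2 - X 3)) := by
            rw [← hrel1, smul_smul, inv_mul_cancel₀ h, one_smul]
          rw [h2']
          exact Submodule.smul_mem _ _ (Submodule.neg_mem _ (Submodule.add_mem _
            (Submodule.smul_mem _ _ (Submodule.subset_span (by simp)))
            (Submodule.smul_mem _ _ (Submodule.subset_span (by simp)))))
        have hsetq : ({X 0 - X 1, X 1 - X 2, X 2 - X 3} : Set E)
            = insert (X 1 - X 2) {X 0 - X 1, X 2 - X 3} := by
          rw [Set.insert_comm]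
        have hsp : Submodule.span ℝ ({X 0 - X 1, X 1 - X 2, X 2 - X 3} : Set E)
            = Submodule.span ℝ ({X 0 - X 1, X 2 - X 3} : Set E) := by
          rw [hsetq, Submodule.span_insert_eq_span hmem]
        obtain ⟨c, hc1, hc3⟩ := exists_inner_eq _ _ (indep_aux _ _ (by rw [← hsp]; exact hspan))
          (‖X 0‖ ^ 2 - ‖X 1‖ ^ 2) (‖X 2‖ ^ 2 - ‖X 3‖ ^ 2)
        refine ⟨c, hc1, ?_, hc3⟩
        have h5 := congrArg (fun y : E => ⟪y, c⟫) hrel1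
        simp only [inner_neg_left, inner_add_left, real_inner_smul_left, hc1, hc3] at h5
        have h6 : mu * ⟪X 1 - X 2, c⟫ = mu * (‖X 1‖ ^ 2 - ‖X 2‖ ^ 2) := by
          rw [h5]; linarith
        exact mul_left_cancel₀ h h6
      · -- nu ≠ 0
        have hrel1 : nu • (X 2 - X 3) = -(lam • (X 0 - X 1) + mu • (X 1 - X 2)) := by
          rw [eq_neg_iff_add_eq_zero, ← hrel]; abel
        have hmem : X 2 - X 3 ∈ Submodule.span ℝ ({X 0 - X 1, X 1 - X 2} : Set E) := by
          have h2' : X 2 - X 3 = nu⁻¹ • -(lam • (X 0 - X 1) + mu • (X 1 - X 2)) := by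
            rw [← hrel1, smul_smul, inv_mul_cancel₀ h, one_smul]
          rw [h2']
          exact Submodule.smul_mem _ _ (Submodule.neg_mem _ (Submodule.add_mem _
            (Submodule.smul_mem _ _ (Submodule.subset_span (by simp)))
            (Submodule.smul_mem _ _ (Submodule.subset_span (by simp)))))
        have hsetq : ({X 0 - X 1, X 1 - X 2, X 2 - X 3} : Set E)
            = insert (X 2 - X 3) {X 0 - X 1, X 1 - X 2} := by
          ext x; simp only [Set.mem_insert_iff, Set.mem_singleton_iff]; tauto
        have hsp : Submodule.span ℝ ({X 0 - X 1, X 1 - X 2, X 2 - X 3} : Set E)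
            = Submodule.span ℝ ({X 0 - X 1, X 1 - X 2} : Set E) := by
          rw [hsetq, Submodule.span_insert_eq_span hmem]
        obtain ⟨c, hc1, hc2⟩ := exists_inner_eq _ _ (indep_aux _ _ (by rw [← hsp]; exact hspan))
          (‖X 0‖ ^ 2 - ‖X 1‖ ^ 2) (‖X 1‖ ^ 2 - ‖X 2‖ ^ 2)
        refine ⟨c, hc1, hc2, ?_⟩
        have h5 := congrArg (fun y : E => ⟪y, c⟫) hrel1
        simp only [inner_neg_left, inner_add_left, real_inner_smul_left, hc1, hc2] at h5
        have h6 : nu * ⟪X 2 - X 3, c⟫ = nu * (‖X 2‖ ^ 2 - ‖X 3‖ ^ 2) := by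
          rw [h5]; linarith
        exact mul_left_cancel₀ h h6
    obtain ⟨c, hc1, hc2, hc3⟩ := key
    refine ⟨(1 / 2 : ℝ) • c, dist (X 0) ((1 / 2 : ℝ) • c), ?_⟩
    have dsq : ∀ p q : E, ⟪p - q, c⟫ = ‖p‖ ^ 2 - ‖q‖ ^ 2 →
        dist p ((1 / 2 : ℝ) • c) = dist q ((1 / 2 : ℝ) • c) := by
      intro p q hpq
      rw [dist_eq_norm, dist_eq_norm]
      have hsq : ‖p - (1 / 2 : ℝ) • c‖ ^ 2 = ‖q - (1 / 2 : ℝ) • c‖ ^ 2 := by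
        rw [norm_sub_sq_real, norm_sub_sq_real, real_inner_smul_right, real_inner_smul_right]
        rw [inner_sub_left] at hpq
        linarith
      exact (sq_eq_sq₀ (norm_nonneg _) (norm_nonneg _)).1 hsq
    have e1 := dsq _ _ hc1
    have e2 := dsq _ _ hc2
    have e3 := dsq _ _ hc3
    rintro p ⟨i, rfl⟩
    fin_cases i
    · rfl
    · exact e1.symm
    · exact (e1.trans e2).symm
    · exact ((e1.trans e2).trans e3).symm
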